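/- Let n ≥ 1 and let K : (0,∞)ⁿ → (0,∞) be differentiable and satisfy the Euler differential equation K(q) + Σⱼ qⱼ · (∂K/∂qⱼ)(q) = 0 for all q ∈ (0,∞)ⁿ. Then for ANY family of differentiable functions dᵢ : (0,∞) → ℝ (i = 1,…,n), the function DI(q) = Σᵢ dᵢ(K(q)·qᵢ) satisfies Σⱼ qⱼ · (∂DI/∂qⱼ)(q) = 0 for every q ∈ (0,∞)ⁿ. -/

import Mathlib

/-- Any positive differentiable `K` solving the Euler differential equation
`K q + ∑ j, q j * ∂K/∂qⱼ = 0` makes ANY divergence invariant: for every family of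
differentiable `dᵢ`, the function `DI q = ∑ i, dᵢ (K q * q i)` satisfies
`∑ j, q j * ∂DI/∂qⱼ = 0` on positive vectors. -/
theorem statement10 (n : ℕ) (hn : 1 ≤ n) (K : (Fin n → ℝ) → ℝ)
    (hKpos : ∀ q : Fin n → ℝ, (∀ i, 0 < q i) → 0 < K q)
    (hKdiff : ∀ q : Fin n → ℝ, (∀ i, 0 < q i) → DifferentiableAt ℝ K q)
    (hEuler : ∀ q : Fin n → ℝ, (∀ i, 0 < q i) →
      K q + ∑ j, q j * fderiv ℝ K q (Pi.single j 1) = 0)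
    (d : Fin n → ℝ → ℝ)
    (hd : ∀ i, ∀ t > (0 : ℝ), DifferentiableAt ℝ (d i) t) :
    ∀ q : Fin n → ℝ, (∀ i, 0 < q i) →
      ∑ j, q j *
        fderiv ℝ (fun q' => ∑ i, d i (K q' * q' i)) q (Pi.single j 1) = 0 := by
  intro q hq
  have hKq := hKpos q hq
  have hK' : HasFDerivAt K (fderiv ℝ K q) q := (hKdiff q hq).hasFDerivAt
  have hf : ∀ i : Fin n, HasFDerivAt (fun q' : Fin n → ℝ => K q' * q' i)
      (K q • (ContinuousLinearMap.proj i : (Fin n → ℝ) →L[ℝ] ℝ) + q i • fderiv ℝ K q) q :=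
    fun i => by
      have hp : HasFDerivAt (fun q' : Fin n → ℝ => q' i)
          (ContinuousLinearMap.proj i : (Fin n → ℝ) →L[ℝ] ℝ) q :=
        (ContinuousLinearMap.proj i : (Fin n → ℝ) →L[ℝ] ℝ).hasFDerivAt
      exact hK'.mul hp
  have hcomp : ∀ i : Fin n, HasFDerivAt (fun q' : Fin n → ℝ => d i (K q' * q' i))
      (deriv (d i) (K q * q i) •
        (K q • (ContinuousLinearMap.proj i : (Fin n → ℝ) →L[ℝ] ℝ) + q i • fderiv ℝ K q)) q :=
    fun i => ((hd i _ (mul_pos hKq (hq i))).hasDerivAt).comp_hasFDerivAt q (hf i)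
  have hsum : HasFDerivAt (fun q' : Fin n → ℝ => ∑ i, d i (K q' * q' i))
      (∑ i, deriv (d i) (K q * q i) •
        (K q • (ContinuousLinearMap.proj i : (Fin n → ℝ) →L[ℝ] ℝ) + q i • fderiv ℝ K q)) q :=
    HasFDerivAt.fun_sum (fun i _ => hcomp i)
  rw [hsum.fderiv]
  simp only [ContinuousLinearMap.sum_apply, ContinuousLinearMap.smul_apply,
    ContinuousLinearMap.add_apply, ContinuousLinearMap.proj_apply, smul_eq_mul,
    Finset.mul_sum]
  rw [Finset.sum_comm]
  apply Finset.sum_eq_zero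
  intro i _
  have hEu := hEuler q hq
  have hsingle : ∀ j : Fin n, (Pi.single j 1 : Fin n → ℝ) i = if i = j then 1 else 0 := by
    intro j; rw [Pi.single_apply]
  calc ∑ j, q j * (deriv (d i) (K q * q i) *
          (K q * (Pi.single j 1 : Fin n → ℝ) i + q i * fderiv ℝ K q (Pi.single j 1)))
      = deriv (d i) (K q * q i) * q i *
          (K q + ∑ j, q j * fderiv ℝ K q (Pi.single j 1)) := by
        simp only [hsingle, mul_ite, mul_one, mul_zero, mul_add, Finset.sum_add_distrib,
          Finset.sum_ite_eq, Finset.mem_univ, if_true, Finset.mul_sum]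
        congr 1
        · ring
        · apply Finset.sum_congr rfl; intro j _; ring
    _ = 0 := by rw [hEu]; ring
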